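/- The core of housing markets violates the RI-worst property: there exist a housing market H on 5 agents with strict preferences, an agent p, and a (p,q)-improvement H' of H, such that in every core allocation of H agent p receives her top choice, while H' admits a core allocation in which p receives only her second choice. -/

import Mathlib

/-- A housing market: each agent `a` has a strict partial order `pref a` on agents,
where `pref a b c` means `a` prefers the house of `c` to the house of `b` (i.e. `b ≺_a c`). -/
structure HousingMarket (N : Type) where
  pref : N → N → N → Prop
  irrefl : ∀ a b, ¬ pref a b b
  trans : ∀ a b c d, pref a b c → pref a c d → pref a b d

variable {N : Type} [Fintype N] [DecidableEq N]

/-- `(a,b)` is an arc of the acceptability graph `G^H` (including all loops). -/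
def accepts (H : HousingMarket N) (a b : N) : Prop := a = b ∨ H.pref a a b

/-- An allocation: a permutation of the agents all of whose arcs are acceptable. -/
def IsAllocation (H : HousingMarket N) (X : N → N) : Prop :=
  Function.Bijective X ∧ ∀ a, accepts H a (X a)

/-- A blocking cycle for `X`: a directed cycle of the acceptability graph (given as a
nonempty duplicate-free list, with successor `c.next`) on which every agent strictly
prefers the house of her successor to the house she gets in `X`. -/
def IsBlockingCycle (H : HousingMarket N) (X : N → N) (c : List N) : Prop :=
  c ≠ [] ∧ c.Nodup ∧
    ∀ (a : N) (h : a ∈ c), accepts H a (c.next a h) ∧ H.pref a (X a) (c.next a h)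

/-- `X` is in the core of `H`. -/
def InCore (H : HousingMarket N) (X : N → N) : Prop :=
  IsAllocation H X ∧ ∀ c : List N, ¬ IsBlockingCycle H X c

/-- A digraph (given by its arc relation `R`) has a directed cycle. -/
def HasCycle (R : N → N → Prop) : Prop :=
  ∃ c : List N, c ≠ [] ∧ c.Nodup ∧ ∀ (a : N) (h : a ∈ c), R a (c.next a h)

/-- Preferences of every agent are strict total orders on her acceptable set. -/
def StrictPrefs (H : HousingMarket N) : Prop :=
  ∀ a b c, accepts H a b → accepts H a c → b ≠ c → H.pref a b c ∨ H.pref a c b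

/-- `H'` is a `(p,q)`-improvement of `H`: only `q`'s preferences change, they agree
on `N \ {p}`, and the value of `p`'s house weakly rises for `q`. -/
def IsPQImprovement (H H' : HousingMarket N) (p q : N) : Prop :=
  (∀ a, a ≠ q → H.pref a = H'.pref a) ∧
  (∀ a b, a ≠ p → b ≠ p → (H.pref q a b ↔ H'.pref q a b)) ∧
  (∀ a, H.pref q a p → H'.pref q a p)

/-- `H'` is a `p`-improvement of `H`: a finite composition of `(p,q)`-improvements. -/
def IsPImprovement (H H' : HousingMarket N) (p : N) : Prop :=
  Relation.ReflTransGen (fun K K' => ∃ q, IsPQImprovement K K' p q) H H'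

/-- rank tables: smaller is better, own house = length of list, 9 = unacceptable -/
def rkH : Fin 5 → Fin 5 → ℕ :=
  ![![2,9,9,1,0], ![0,2,9,9,1], ![9,0,2,1,9], ![9,0,9,1,9], ![1,0,9,2,3]]

def rkH' : Fin 5 → Fin 5 → ℕ :=
  ![![2,9,9,1,0], ![0,2,9,9,1], ![9,0,2,1,9], ![9,0,9,1,9], ![0,1,9,2,3]]

def prefOf (rk : Fin 5 → Fin 5 → ℕ) (a x y : Fin 5) : Prop :=
  rk a x < 9 ∧ rk a y < rk a x

def mkMarket (rk : Fin 5 → Fin 5 → ℕ) : HousingMarket (Fin 5) where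
  pref := prefOf rk
  irrefl := fun _ _ h => absurd h.2 (lt_irrefl _)
  trans := fun _ _ _ _ h1 h2 => ⟨h1.1, h2.2.trans h1.2⟩

def HH : HousingMarket (Fin 5) := mkMarket rkH
def HH' : HousingMarket (Fin 5) := mkMarket rkH'

instance : ∀ a x y, Decidable (HH.pref a x y) :=
  fun a x y => inferInstanceAs (Decidable (rkH a x < 9 ∧ rkH a y < rkH a x))
instance : ∀ a x y, Decidable (HH'.pref a x y) :=
  fun a x y => inferInstanceAs (Decidable (rkH' a x < 9 ∧ rkH' a y < rkH' a x))
instance : ∀ a b, Decidable (accepts HH a b) :=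
  fun a b => inferInstanceAs (Decidable (a = b ∨ HH.pref a a b))
instance : ∀ a b, Decidable (accepts HH' a b) :=
  fun a b => inferInstanceAs (Decidable (a = b ∨ HH'.pref a a b))

lemma strictH : StrictPrefs HH := by
  show ∀ a b c, _ → _ → _ → _ ; decide

lemma strictH' : StrictPrefs HH' := by
  show ∀ a b c, _ → _ → _ → _ ; decide

lemma key1 : ∀ a : Fin 5, a ≠ 4 → ∀ x y, (HH.pref a x y ↔ HH'.pref a x y) := by decide

lemma pqimp : IsPQImprovement HH HH' 0 4 := by
  refine ⟨?_, ?_, ?_⟩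
  · intro a ha
    funext x y
    exact propext (key1 a ha x y)
  · show ∀ a b, _ → _ → _ ; decide
  · show ∀ a, _ → _ ; decide

/-- the witness core allocation of HH' -/
def Xw : Fin 5 → Fin 5 := ![3, 4, 2, 1, 0]

lemma Xw_alloc : IsAllocation HH' Xw := by
  constructor
  · show Function.Injective Xw ∧ Function.Surjective Xw
    constructor <;> decide
  · show ∀ a, accepts HH' a (Xw a) ; decide

lemma Xw_core : InCore HH' Xw := by
  refine ⟨Xw_alloc, ?_⟩
  rintro c ⟨hne, _, hall⟩
  have h3 : (3 : Fin 5) ∉ c := by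
    intro h
    have h2 := (hall 3 h).2
    have : ∀ y, ¬ HH'.pref 3 (Xw 3) y := by decide
    exact this _ h2
  have h4 : (4 : Fin 5) ∉ c := by
    intro h
    have h2 := (hall 4 h).2
    have : ∀ y, ¬ HH'.pref 4 (Xw 4) y := by decide
    exact this _ h2
  have h0 : (0 : Fin 5) ∉ c := by
    intro h
    have h2 := (hall 0 h).2
    have he : ∀ y, HH'.pref 0 (Xw 0) y → y = 4 := by decide
    exact h4 (he _ h2 ▸ List.next_mem c 0 h)
  have h1 : (1 : Fin 5) ∉ c := by
    intro h
    have h2 := (hall 1 h).2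
    have he : ∀ y, HH'.pref 1 (Xw 1) y → y = 0 := by decide
    exact h0 (he _ h2 ▸ List.next_mem c 1 h)
  have h2m : (2 : Fin 5) ∉ c := by
    intro h
    have h2 := (hall 2 h).2
    have he : ∀ y, HH'.pref 2 (Xw 2) y → y = 1 ∨ y = 3 := by decide
    rcases he _ h2 with e | e
    · exact h1 (e ▸ List.next_mem c 2 h)
    · exact h3 (e ▸ List.next_mem c 2 h)
  cases c with
  | nil => exact hne rfl
  | cons a t =>
    have ha : a ∈ a :: t := List.mem_cons_self
    fin_cases a
    · exact h0 ha
    · exact h1 ha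
    · exact h2m ha
    · exact h3 ha
    · exact h4 ha

lemma coreH : ∀ X, InCore HH X → X 0 = 4 := by
  intro X hX
  by_contra h0ne
  obtain ⟨⟨hbij, hacc⟩, hblock⟩ := hX
  have hinj := hbij.1
  have m0' : ∀ v, accepts HH 0 v → v = 0 ∨ v = 4 ∨ v = 3 := by decide
  have m1' : ∀ v, accepts HH 1 v → v = 1 ∨ v = 0 ∨ v = 4 := by decide
  have m3' : ∀ v, accepts HH 3 v → v = 3 ∨ v = 1 := by decide
  have m4' : ∀ v, accepts HH 4 v → v = 4 ∨ v = 1 ∨ v = 0 ∨ v = 3 := by decide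
  have m0 := m0' _ (hacc 0)
  have m1 := m1' _ (hacc 1)
  have m3 := m3' _ (hacc 3)
  have m4 := m4' _ (hacc 4)
  -- blocking cycle [0,4] whenever X 0 ∈ {0,3} and X 4 ∈ {4,3}
  have bk04 : ∀ (e0 : X 0 = 0 ∨ X 0 = 3) (e4 : X 4 = 4 ∨ X 4 = 3), False := by
    intro e0 e4
    refine hblock [0, 4] ⟨by decide, by decide, ?_⟩
    intro a h
    fin_cases h <;> refine ⟨by decide, ?_⟩ <;>
      [rcases e0 with e | e; rcases e4 with e | e] <;> rw [e] <;> decide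
  rcases m0 with e0 | e0 | e0
  · -- X 0 = 0
    rcases m4 with e4 | e4 | e4 | e4
    · exact bk04 (Or.inl e0) (Or.inl e4)
    · -- X 4 = 1
      have e3 : X 3 = 3 := by
        rcases m3 with e | e
        · exact e
        · exact absurd (hinj (e.trans e4.symm)) (by decide)
      have e1 : X 1 = 4 := by
        rcases m1 with e | e | e
        · exact absurd (hinj (e.trans e4.symm)) (by decide)
        · exact absurd (hinj (e.trans e0.symm)) (by decide)
        · exact e
      refine hblock [1, 0, 3] ⟨by decide, by decide, ?_⟩
      intro a h
      fin_cases h <;> refine ⟨by decide, ?_⟩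
      · rw [e1]; decide
      · rw [e0]; decide
      · rw [e3]; decide
    · exact absurd (hinj (e4.trans e0.symm)) (by decide)
    · exact bk04 (Or.inl e0) (Or.inr e4)
  · exact h0ne e0
  · -- X 0 = 3
    rcases m4 with e4 | e4 | e4 | e4
    · exact bk04 (Or.inr e0) (Or.inl e4)
    · -- X 4 = 1 : impossible
      rcases m3 with e | e
      · exact absurd (hinj (e.trans e0.symm)) (by decide)
      · exact absurd (hinj (e.trans e4.symm)) (by decide)
    · -- X 4 = 0
      have e3 : X 3 = 1 := by
        rcases m3 with e | e
        · exact absurd (hinj (e.trans e0.symm)) (by decide)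
        · exact e
      have e1 : X 1 = 4 := by
        rcases m1 with e | e | e
        · exact absurd (hinj (e.trans e3.symm)) (by decide)
        · exact absurd (hinj (e.trans e4.symm)) (by decide)
        · exact e
      refine hblock [1, 0, 4] ⟨by decide, by decide, ?_⟩
      intro a h
      fin_cases h <;> refine ⟨by decide, ?_⟩
      · rw [e1]; decide
      · rw [e0]; decide
      · rw [e4]; decide
    · exact absurd (hinj (e4.trans e0.symm)) (by decide)

/-- the core violates the RI-worst property: there is a housing market
`H` on 5 agents with strict preferences, an agent `p`, a `(p,q)`-improvement `H'`, a
top choice `a` and a second choice `b` of `p`, such that every core allocation of `H`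
gives `p` her top choice `a`, yet some core allocation of `H'` gives `p` only `b`. -/
theorem stmt11 :
    ∃ (H H' : HousingMarket (Fin 5)) (p q a b : Fin 5),
      StrictPrefs H ∧ StrictPrefs H' ∧ IsPQImprovement H H' p q ∧
      p ≠ a ∧ p ≠ b ∧ a ≠ b ∧ accepts H p a ∧ accepts H p b ∧
      -- `a` is `p`'s top choice and `b` her second choice in `H`
      (∀ c, accepts H p c → c ≠ a → H.pref p c a) ∧
      (∀ c, accepts H p c → c ≠ a → c ≠ b → H.pref p c b) ∧
      (∀ X, InCore H X → X p = a) ∧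
      (∃ X', InCore H' X' ∧ X' p = b) := by
  refine ⟨HH, HH', 0, 4, 4, 3, strictH, strictH', pqimp,
    by decide, by decide, by decide, by decide, by decide, by decide, by decide,
    coreH, Xw, Xw_core, rfl⟩
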